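/- For a polynomial u of degree at most 2N+1 with u(x) = Σ u_i x^i, the Gauss–Lobatto quadrature with N+1 nodes satisfies Σ_{i=0}^N u(ξ_i) ρ_i = ∫_{−1}^1 u(x) dx + u_{2N} · 2^{2N+1} N ((N−1)!)² ((N+1)!)² / ((N+1)(2N+1)((2N)!)²), where u_{2N} is the coefficient of x^{2N} in u. -/

import Mathlib

open Finset

open Polynomial intervalIntegral


noncomputable def pint (p : Polynomial ℝ) : ℝ := ∫ x in (-1:ℝ)..1, p.eval x

lemma pint_intable (p : Polynomial ℝ) (a b : ℝ) :
    IntervalIntegrable (fun x => p.eval x) MeasureTheory.volume a b :=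
  (p.continuous_aeval).intervalIntegrable a b

lemma pint_add (p q : Polynomial ℝ) : pint (p + q) = pint p + pint q := by
  unfold pint
  simp only [eval_add]
  exact integral_add (pint_intable p _ _) (pint_intable q _ _)

lemma pint_smul (c : ℝ) (p : Polynomial ℝ) : pint (C c * p) = c * pint p := by
  unfold pint
  simp only [eval_mul, eval_C]
  exact integral_const_mul c _

lemma pint_neg (p : Polynomial ℝ) : pint (-p) = - pint p := by
  have := pint_smul (-1) p
  simpa using this

lemma pint_sub (p q : Polynomial ℝ) : pint (p - q) = pint p - pint q := by
  rw [sub_eq_add_neg, pint_add, pint_neg, sub_eq_add_neg]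

lemma pint_derivative (p : Polynomial ℝ) :
    pint (derivative p) = p.eval 1 - p.eval (-1) := by
  unfold pint
  apply integral_eq_sub_of_hasDerivAt (fun x _ => p.hasDerivAt x)
  exact pint_intable _ _ _

lemma pint_comp_neg (p : Polynomial ℝ) : pint (p.comp (-X)) = pint p := by
  unfold pint
  have : (fun x : ℝ => (p.comp (-X)).eval x) = fun x : ℝ => p.eval (-x) := by
    funext x; simp [eval_comp]
  rw [this]
  rw [show (∫ x in (-1:ℝ)..1, p.eval (-x)) = ∫ x in (-(1:ℝ))..(-(-1:ℝ)), p.eval x from integral_comp_neg (fun x => p.eval x)]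
  norm_num

lemma coeff_comp_neg (p : Polynomial ℝ) (n : ℕ) :
    (p.comp (-X)).coeff n = (-1)^n * p.coeff n := by
  induction p using Polynomial.induction_on' with
  | add p q hp hq => simp [add_comp, hp, hq, mul_add]
  | monomial k a =>
    simp only [monomial_comp]
    rw [show ((monomial k) a : Polynomial ℝ) = C a * X^k by simp [C_mul_X_pow_eq_monomial]]
    have hk : (-X : Polynomial ℝ)^k = C ((-1)^k) * X^k := by
      rw [neg_pow]; simp [C_pow]
    rw [hk, ← mul_assoc, ← C_mul, coeff_C_mul, coeff_C_mul, coeff_X_pow]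
    rcases eq_or_ne n k with h | h
    · subst h; ring
    · simp [h]

lemma pint_odd (p : Polynomial ℝ) (h : p.comp (-X) = -p) : pint p = 0 := by
  have := pint_comp_neg p
  rw [h, pint_neg] at this
  linarith

lemma deriv_beta (n : ℕ) :
    derivative (X * (1 - X^2)^(n+1)) =
      C (2*(n:ℝ)+3) * (1 - X^2)^(n+1) - C (2*(n:ℝ)+2) * (1 - X^2)^n := by
  have h : derivative (X * (1 - X^2)^(n+1) : Polynomial ℝ)
      = (1-X^2)^(n+1) + X * (C ((n:ℝ)+1) * (1 - X^2)^n * (0-(2*X))) := by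
    simp only [derivative_mul, derivative_pow, derivative_X, derivative_sub,
      derivative_one, derivative_X_pow, C_eq_natCast, C_add, C_1]
    push_cast
    ring
  rw [h]
  simp only [C_add, C_mul, map_ofNat, C_1, C_eq_natCast]
  ring

lemma pint_beta (n : ℕ) :
    pint ((1 - X^2)^n) = 2^(2*n+1) * (n.factorial:ℝ)^2 / ((2*n+1).factorial:ℝ) := by
  induction n with
  | zero =>
    simp [pint]
    norm_num
  | succ n ih =>
    have hb : (2*(n:ℝ)+3) * pint ((1-X^2)^(n+1)) - (2*(n:ℝ)+2) * pint ((1-X^2)^n) = 0 := by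
      have h := pint_derivative (X * (1 - X^2)^(n+1))
      rw [deriv_beta, pint_sub, pint_smul, pint_smul] at h
      simp only [eval_mul, eval_pow, eval_sub, eval_one, eval_X] at h
      norm_num at h
      linarith
    rw [ih] at hb
    have h2 : pint ((1-X^2)^(n+1))
        = (2*(n:ℝ)+2) * (2^(2*n+1) * (n.factorial:ℝ)^2 / ((2*n+1).factorial:ℝ)) / (2*(n:ℝ)+3) := by
      field_simp at hb ⊢
      linarith
    rw [h2]
    have hf1 : ((n+1).factorial : ℝ) = ((n:ℝ)+1) * (n.factorial:ℝ) := by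
      rw [Nat.factorial_succ]; push_cast; ring
    have hf2 : ((2*(n+1)+1).factorial : ℝ) = (2*(n:ℝ)+3) * ((2*(n:ℝ)+2)) * ((2*n+1).factorial:ℝ) := by
      have h3 : 2*(n+1)+1 = (2*n+1) + 1 + 1 := by ring
      rw [h3, Nat.factorial_succ, Nat.factorial_succ]; push_cast; ring
    rw [hf1, hf2]
    have hpos : ((2*n+1).factorial : ℝ) > 0 := by positivity
    field_simp
    ring

noncomputable def RodF (n : ℕ) : Polynomial ℝ := (X^2 - 1)^n
noncomputable def Rod (n : ℕ) : Polynomial ℝ := derivative^[n] (RodF n)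

lemma RodF_dvd (n k : ℕ) (hk : k ≤ n) :
    ∃ g : Polynomial ℝ, derivative^[k] (RodF n) = (X^2-1)^(n-k) * g := by
  induction k with
  | zero => exact ⟨1, by simp [RodF]⟩
  | succ k ih =>
    obtain ⟨g, hg⟩ := ih (Nat.le_of_succ_le hk)
    set m := n - (k+1) with hm
    have hnk : n - k = m + 1 := by omega
    refine ⟨C (2*((m:ℝ)+1)) * X * g + (X^2-1) * derivative g, ?_⟩
    rw [Function.iterate_succ_apply', hg, hnk, derivative_mul, derivative_pow]
    rw [Nat.add_sub_cancel]
    simp only [derivative_sub, derivative_pow, derivative_X, derivative_one,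
      C_mul, C_add, map_ofNat, C_1]
    push_cast
    simp only [C_add, C_mul, map_ofNat, C_1]
    ring

lemma RodF_root (n k : ℕ) (hk : k < n) (x : ℝ) (hx : x^2 = 1) :
    (derivative^[k] (RodF n)).eval x = 0 := by
  obtain ⟨g, hg⟩ := RodF_dvd n k hk.le
  rw [hg]
  have : n - k ≠ 0 := by omega
  simp [eval_pow, hx]
  tauto

lemma pint_ibp (g p : Polynomial ℝ) :
    pint (derivative g * p)
      = (g*p).eval 1 - (g*p).eval (-1) - pint (g * derivative p) := by
  have h := pint_derivative (g * p)
  rw [derivative_mul, pint_add] at h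
  linarith

lemma Rod_shift (n : ℕ) : ∀ k ≤ n, ∀ p : Polynomial ℝ,
    pint (derivative^[k] (RodF n) * p) = (-1)^k * pint (RodF n * derivative^[k] p) := by
  intro k
  induction k with
  | zero => intro _ p; simp
  | succ k ih =>
    intro hk p
    rw [Function.iterate_succ_apply', pint_ibp]
    have h1 : (derivative^[k] (RodF n) * p).eval 1 = 0 := by
      rw [eval_mul, RodF_root n k (by omega) 1 (by norm_num)]; ring
    have h2 : (derivative^[k] (RodF n) * p).eval (-1) = 0 := by
      rw [eval_mul, RodF_root n k (by omega) (-1) (by norm_num)]; ring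
    rw [h1, h2, ih (by omega) (derivative p), Function.iterate_succ_apply]
    ring

lemma Rod_orth (n : ℕ) (p : Polynomial ℝ) (hp : p.natDegree < n) :
    pint (Rod n * p) = 0 := by
  rw [Rod, Rod_shift n n le_rfl p, Polynomial.iterate_derivative_eq_zero hp]
  simp [pint]

lemma Rod_self (n : ℕ) :
    pint (Rod n * X^n) = (n.factorial : ℝ) * pint ((1-X^2)^n) := by
  rw [Rod, Rod_shift n n le_rfl (X^n)]
  rw [Polynomial.iterate_derivative_X_pow_eq_C_mul]
  simp only [Nat.sub_self, pow_zero, mul_one, Nat.descFactorial_self]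
  have hR : RodF n = C ((-1:ℝ)^n) * (1-X^2)^n := by
    rw [RodF]
    have h : (X^2 - 1 : Polynomial ℝ) = (-1) * (1 - X^2) := by ring
    rw [h, mul_pow]
    simp [C_pow]
  rw [hR]
  rw [show C ((-1:ℝ)^n) * (1-X^2)^n * (C (n.factorial:ℝ))
      = C ((-1:ℝ)^n * (n.factorial:ℝ)) * (1-X^2)^n by rw [C_mul]; ring]
  rw [pint_smul]
  ring_nf
  rw [pow_mul', neg_one_sq, one_pow]
  ring

lemma RodF_monic (n : ℕ) : (RodF n).Monic := by
  have h : (X^2 - 1 : Polynomial ℝ).Monic := by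
    have := monic_X_pow_sub_C (1:ℝ) (n := 2) (by norm_num)
    simpa using this
  exact h.pow n

lemma RodF_natDegree (n : ℕ) : (RodF n).natDegree = 2*n := by
  have hm : (X^2 - 1 : Polynomial ℝ).Monic := by
    have := monic_X_pow_sub_C (1:ℝ) (n := 2) (by norm_num)
    simpa using this
  have h : (X^2 - 1 : Polynomial ℝ).natDegree = 2 := by
    have h2 : (X^2 - 1 : Polynomial ℝ) = X^2 - C 1 := by simp
    rw [h2, natDegree_X_pow_sub_C]
  rw [RodF, hm.natDegree_pow, h, mul_comm]

lemma iter_coeff (n k : ℕ) (hk : k ≤ 2*n) :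
    (derivative^[k] (RodF n)).coeff (2*n - k) = ((2*n).descFactorial k : ℝ) := by
  induction k with
  | zero =>
    simp only [Function.iterate_zero, id_eq, Nat.sub_zero, Nat.descFactorial_zero, Nat.cast_one]
    have h := (RodF_monic n).leadingCoeff
    rwa [leadingCoeff, RodF_natDegree] at h
  | succ k ih =>
    rw [Function.iterate_succ_apply', coeff_derivative]
    have h1 : 2*n - (k+1) + 1 = 2*n - k := by omega
    rw [h1, ih (by omega), Nat.descFactorial_succ]
    push_cast [Nat.cast_sub (show k ≤ 2*n by omega), Nat.cast_sub (show k+1 ≤ 2*n by omega)]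
    ring

lemma iter_deg (n k : ℕ) : (derivative^[k] (RodF n)).natDegree ≤ 2*n - k := by
  have := Polynomial.natDegree_iterate_derivative (RodF n) k
  rwa [RodF_natDegree] at this

noncomputable def Qt (N : ℕ) : Polynomial ℝ := derivative (Rod N)

lemma Rod_coeff (n : ℕ) : (Rod n).coeff n = ((2*n).descFactorial n : ℝ) := by
  have h := iter_coeff n n (by omega)
  rw [show 2*n - n = n by omega] at h
  exact h

lemma Rod_deg (n : ℕ) : (Rod n).natDegree ≤ n := by
  have h := iter_deg n n
  rwa [show 2*n - n = n by omega] at h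

lemma Qt_coeff_top (N : ℕ) (hN : 1 ≤ N) :
    (Qt N).coeff (N-1) = (N:ℝ) * ((2*N).descFactorial N : ℝ) := by
  rw [Qt, coeff_derivative, show N - 1 + 1 = N by omega, Rod_coeff]
  rw [show ((N-1:ℕ):ℝ) + 1 = (N:ℝ) by push_cast [Nat.cast_sub hN]; ring]
  ring

lemma Qt_deg (N : ℕ) : (Qt N).natDegree ≤ N - 1 := by
  rw [Qt]
  exact le_trans (natDegree_derivative_le _) (Nat.sub_le_sub_right (Rod_deg N) 1)

lemma descF_pos (N : ℕ) : 0 < ((2*N).descFactorial N : ℝ) := by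
  have h : (2*N).descFactorial N ≠ 0 := by
    rw [Ne, Nat.descFactorial_eq_zero_iff_lt]
    omega
  have : 0 < (2*N).descFactorial N := Nat.pos_of_ne_zero h
  exact_mod_cast this

-- parity
lemma comp_neg_derivative (p : Polynomial ℝ) :
    (derivative p).comp (-X) = - derivative (p.comp (-X)) := by
  rw [derivative_comp]
  simp

lemma comp_neg_iterate (k : ℕ) (p : Polynomial ℝ) :
    (derivative^[k] p).comp (-X) = C ((-1:ℝ)^k) * derivative^[k] (p.comp (-X)) := by
  induction k generalizing p with
  | zero => simp
  | succ k ih =>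
    rw [Function.iterate_succ_apply', comp_neg_derivative, ih, derivative_C_mul,
      Function.iterate_succ_apply']
    rw [show ((-1:ℝ))^(k+1) = -(-1:ℝ)^k by ring]
    simp [map_neg]

lemma RodF_comp_neg (n : ℕ) : (RodF n).comp (-X) = RodF n := by
  rw [RodF]
  simp [pow_comp, sub_comp, X_comp, one_comp]

lemma Rod_comp_neg (n : ℕ) : (Rod n).comp (-X) = C ((-1:ℝ)^n) * Rod n := by
  rw [Rod, comp_neg_iterate, RodF_comp_neg]

lemma Qt_comp_neg (N : ℕ) : (Qt N).comp (-X) = C ((-1:ℝ)^(N+1)) * Qt N := by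
  rw [Qt, comp_neg_derivative, Rod_comp_neg, derivative_C_mul]
  rw [show ((-1:ℝ))^(N+1) = -(-1:ℝ)^N by ring]
  simp [map_neg, Qt]

lemma natDeg_w : (1 - X^2 : Polynomial ℝ).natDegree ≤ 2 := by
  refine le_trans (natDegree_sub_le _ _) ?_
  simp

lemma Qt_orth (N : ℕ) (hN : 1 ≤ N) (p : Polynomial ℝ)
    (hp : p = 0 ∨ p.natDegree + 2 ≤ N) :
    pint ((1 - X^2) * Qt N * p) = 0 := by
  rcases hp with rfl | hp
  · simp [pint]
  have key := pint_derivative ((1-X^2) * p * Rod N)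
  have e1 : ((1-X^2) * p * Rod N).eval 1 = 0 := by simp
  have e2 : ((1-X^2) * p * Rod N).eval (-1) = 0 := by simp
  rw [e1, e2, derivative_mul, pint_add] at key
  have hdeg : (derivative ((1-X^2) * p)).natDegree < N := by
    have h1 : ((1-X^2) * p).natDegree ≤ 2 + p.natDegree :=
      natDegree_mul_le_of_le natDeg_w le_rfl
    have h2 := natDegree_derivative_le ((1-X^2) * p)
    omega
  have horth : pint (derivative ((1-X^2) * p) * Rod N) = 0 := by
    rw [show derivative ((1-X^2) * p) * Rod N = Rod N * derivative ((1-X^2) * p) by ring]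
    exact Rod_orth N _ hdeg
  rw [horth] at key
  rw [show (1 - X^2) * Qt N * p = (1-X^2) * p * derivative (Rod N) by rw [← Qt]; ring]
  linarith

lemma Qt_norm (N : ℕ) (hN : 1 ≤ N) :
    pint ((1 - X^2) * Qt N * Qt N)
      = (N:ℝ) * ((N:ℝ)+1) * ((2*N).descFactorial N : ℝ) * (N.factorial:ℝ)
          * pint ((1-X^2)^N) := by
  set A : Polynomial ℝ := (1 - X^2) * Qt N with hA
  set T : Polynomial ℝ := derivative A with hT
  -- IBP
  have key := pint_derivative (A * Rod N)
  have e1 : (A * Rod N).eval 1 = 0 := by simp [hA]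
  have e2 : (A * Rod N).eval (-1) = 0 := by simp [hA]
  rw [e1, e2, derivative_mul, pint_add, ← hT, ← Qt] at key
  -- coefficient of T at N
  have hQtop : (Qt N).coeff (N-1) = (N:ℝ) * ((2*N).descFactorial N : ℝ) := Qt_coeff_top N hN
  have hAc : A.coeff (N+1) = -((N:ℝ) * ((2*N).descFactorial N : ℝ)) := by
    have h1 : A = Qt N - X^2 * Qt N := by rw [hA]; ring
    have h2 : (X^2 * Qt N).coeff (N+1) = (Qt N).coeff (N-1) := by
      have := coeff_X_pow_mul (Qt N) 2 (N-1)
      rwa [show N - 1 + 2 = N + 1 by omega] at this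
    have h3 : (Qt N).coeff (N+1) = 0 := by
      apply coeff_eq_zero_of_natDegree_lt
      have := Qt_deg N
      omega
    rw [h1, coeff_sub, h2, h3, hQtop]
    ring
  have hTc : T.coeff N = -((N:ℝ)+1) * ((N:ℝ) * ((2*N).descFactorial N : ℝ)) := by
    rw [hT, coeff_derivative, hAc]
    push_cast
    ring
  have hTd : T.natDegree ≤ N := by
    have h1 : A.natDegree ≤ 2 + (N-1) := natDegree_mul_le_of_le natDeg_w (Qt_deg N)
    have h2 := natDegree_derivative_le A
    rw [← hT] at h2
    omega
  set c : ℝ := T.coeff N with hc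
  set Tr : Polynomial ℝ := T - C c * X^N with hTr
  have hTrd : Tr.natDegree < N := by
    have : Tr.natDegree ≤ N - 1 := by
      apply natDegree_le_iff_coeff_eq_zero.mpr
      intro m hm
      rw [hTr, coeff_sub, coeff_C_mul, coeff_X_pow]
      rcases eq_or_ne m N with rfl | hne
      · simp [hc]
      · have hmN : N < m := by omega
        rw [coeff_eq_zero_of_natDegree_lt (by omega : T.natDegree < m)]
        simp [hne]
    omega
  have hsplit : pint (T * Rod N) = c * ((N.factorial:ℝ) * pint ((1-X^2)^N)) := by
    have h1 : T * Rod N = C c * (Rod N * X^N) + Rod N * Tr := by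
      rw [hTr]; ring
    rw [h1, pint_add, pint_smul, Rod_self, Rod_orth N Tr hTrd]
    ring
  have hfin : pint (A * Qt N) = -c * ((N.factorial:ℝ) * pint ((1-X^2)^N)) := by
    rw [hsplit] at key
    linarith
  rw [show (1 - X^2) * Qt N * Qt N = A * Qt N by rw [hA]]
  rw [hfin, hTc]
  ring

lemma pint_sq_zero (d : Polynomial ℝ) (h : pint ((1-X^2) * (d * d)) = 0) : d = 0 := by
  by_contra hd
  set f : ℝ → ℝ := fun x => (1-x^2) * (d.eval x * d.eval x) with hf
  have hfc : Continuous f := by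
    apply Continuous.mul
    · exact (continuous_const.sub (continuous_pow 2))
    · exact (d.continuous_aeval.mul d.continuous_aeval)
  have hint : (∫ x in (-1:ℝ)..1, f x) = 0 := by
    rw [← h]
    unfold pint
    congr 1
    funext x
    simp [hf]
  have hnonneg : 0 ≤ᵐ[MeasureTheory.volume.restrict (Set.Ioc (-1:ℝ) 1)] f := by
    apply (MeasureTheory.ae_restrict_iff' measurableSet_Ioc).mpr
    apply Filter.Eventually.of_forall
    intro x hx
    have h1 : x^2 ≤ 1 := by
      rw [sq_le_one_iff_abs_le_one, abs_le]
      exact ⟨hx.1.le, hx.2⟩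
    have : 0 ≤ 1 - x^2 := by linarith
    have : 0 ≤ d.eval x * d.eval x := mul_self_nonneg _
    simp only [hf]
    positivity
  have hzero : f =ᵐ[MeasureTheory.volume.restrict (Set.Ioc (-1:ℝ) 1)] 0 := by
    rw [← intervalIntegral.integral_eq_zero_iff_of_le_of_nonneg_ae (by norm_num) hnonneg
      (hfc.intervalIntegrable _ _)]
    exact hint
  -- find a point in Ioo (-1,1) where f ≠ 0
  have hroots : {x : ℝ | d.IsRoot x}.Finite := Polynomial.finite_setOf_isRoot hd
  have hIoo : (Set.Ioo (-1:ℝ) 1).Infinite := Set.Ioo_infinite (by norm_num : (-1:ℝ) < 1)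
  obtain ⟨x₀, hx₀⟩ := (hIoo.diff hroots).nonempty
  have hx₀I : x₀ ∈ Set.Ioo (-1:ℝ) 1 := hx₀.1
  have hfx₀ : f x₀ ≠ 0 := by
    have h1 : (1:ℝ) - x₀^2 > 0 := by nlinarith [hx₀I.1, hx₀I.2]
    have h2 : d.eval x₀ ≠ 0 := hx₀.2
    simp only [hf]
    positivity
  -- the open set where f ≠ 0 intersected with Ioo has positive measure
  set A := {x : ℝ | f x ≠ 0} ∩ Set.Ioo (-1:ℝ) 1 with hA
  have hAopen : IsOpen A := ((isOpen_ne.preimage hfc)).inter isOpen_Ioo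
  have hAne : A.Nonempty := ⟨x₀, hfx₀, hx₀I⟩
  have hpos : 0 < MeasureTheory.volume A := hAopen.measure_pos _ hAne
  have hsub : A ⊆ {x | f x ≠ 0} ∩ Set.Ioc (-1:ℝ) 1 := by
    intro x hx
    exact ⟨hx.1, hx.2.1, hx.2.2.le⟩
  have hmz : MeasureTheory.volume ({x | f x ≠ 0} ∩ Set.Ioc (-1:ℝ) 1) = 0 := by
    have h0 := MeasureTheory.ae_iff.mp hzero
    rw [MeasureTheory.Measure.restrict_apply₀' measurableSet_Ioc.nullMeasurableSet] at h0
    exact h0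
  exact hpos.ne' (MeasureTheory.measure_mono_null hsub hmz)

noncomputable def Jn (N : ℕ) : Polynomial ℝ :=
  C (((N:ℝ) * ((2*N).descFactorial N : ℝ))⁻¹) * Qt N

lemma Jn_lc_ne (N : ℕ) (hN : 1 ≤ N) : ((N:ℝ) * ((2*N).descFactorial N : ℝ)) ≠ 0 := by
  have h1 : (0:ℝ) < N := by exact_mod_cast hN
  have h2 := descF_pos N
  positivity

lemma Jn_coeff_top (N : ℕ) (hN : 1 ≤ N) : (Jn N).coeff (N-1) = 1 := by
  rw [Jn, coeff_C_mul, Qt_coeff_top N hN, inv_mul_cancel₀ (Jn_lc_ne N hN)]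

lemma Jn_deg (N : ℕ) : (Jn N).natDegree ≤ N - 1 := by
  refine le_trans (natDegree_mul_le) ?_
  rw [natDegree_C, zero_add]
  exact Qt_deg N

lemma Jn_orth (N : ℕ) (hN : 1 ≤ N) (p : Polynomial ℝ)
    (hp : p = 0 ∨ p.natDegree + 2 ≤ N) :
    pint ((1 - X^2) * Jn N * p) = 0 := by
  have h : (1 - X^2) * Jn N * p
      = C (((N:ℝ) * ((2*N).descFactorial N : ℝ))⁻¹) * ((1 - X^2) * Qt N * p) := by
    rw [Jn]; ring
  rw [h, pint_smul, Qt_orth N hN p hp, mul_zero]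

lemma Jn_comp_neg (N : ℕ) : (Jn N).comp (-X) = C ((-1:ℝ)^(N+1)) * Jn N := by
  rw [Jn, mul_comp, C_comp, Qt_comp_neg]
  ring

lemma Jn_norm (N : ℕ) (hN : 1 ≤ N) :
    pint ((1 - X^2) * (Jn N * Jn N))
      = 2 ^ (2 * N + 1) * (N:ℝ) * (((N:ℕ) - 1).factorial : ℝ) ^ 2
          * ((N + 1).factorial : ℝ) ^ 2
          / (((N:ℝ) + 1) * (2 * (N:ℝ) + 1) * (((2 * N).factorial : ℝ)) ^ 2) := by
  set L : ℝ := (N:ℝ) * ((2*N).descFactorial N : ℝ) with hL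
  have h : (1 - X^2) * (Jn N * Jn N) = C (L⁻¹ * L⁻¹) * ((1 - X^2) * Qt N * Qt N) := by
    rw [Jn, C_mul]; ring
  rw [h, pint_smul, Qt_norm N hN, pint_beta]
  -- now pure real arithmetic
  have hd : ((2*N).descFactorial N : ℝ) * (N.factorial : ℝ) = ((2*N).factorial : ℝ) := by
    have := Nat.factorial_mul_descFactorial (show N ≤ 2*N by omega)
    rw [show 2*N - N = N by omega] at this
    exact_mod_cast congrArg (fun k : ℕ => (k:ℝ)) (by rw [mul_comm] at this; exact this)
  have hNf : (N.factorial : ℝ) = (N:ℝ) * (((N:ℕ)-1).factorial : ℝ) := by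
    have h1 : N = (N-1) + 1 := by omega
    rw [h1, Nat.factorial_succ]
    push_cast
    ring
  have hN1f : ((N+1).factorial : ℝ) = ((N:ℝ)+1) * (N.factorial : ℝ) := by
    rw [Nat.factorial_succ]; push_cast; ring
  have h2N1f : ((2*N+1).factorial : ℝ) = (2*(N:ℝ)+1) * ((2*N).factorial : ℝ) := by
    rw [Nat.factorial_succ]; push_cast; ring
  have hdpos := descF_pos N
  have hNpos : (0:ℝ) < N := by exact_mod_cast hN
  have hfpos : (0:ℝ) < (N.factorial : ℝ) := by exact_mod_cast N.factorial_pos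
  have h2fpos : (0:ℝ) < ((2*N).factorial : ℝ) := by exact_mod_cast (2*N).factorial_pos
  have hNm1pos : (0:ℝ) < (((N:ℕ)-1).factorial : ℝ) := by exact_mod_cast (N-1).factorial_pos
  -- derive descF = (2N)!/N!
  have hdval : ((2*N).descFactorial N : ℝ) = ((2*N).factorial : ℝ) / (N.factorial : ℝ) := by
    field_simp
    linarith [hd]
  rw [hL, hdval, hN1f, h2N1f, hNf]
  field_simp


/-- Aliasing formula for the `(N+1)`-point Gauss–Lobatto quadrature
(characterized by nodes `±1`, strictly increasing nodes, and exactness for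
polynomials of degree `≤ 2N−1`): for any polynomial `u` of degree at most
`2N+1`,
`Σ u(ξ_i) ρ_i = ∫_{−1}^1 u + u_{2N}·2^{2N+1} N ((N−1)!)²((N+1)!)² / ((N+1)(2N+1)((2N)!)²)`,
where `u_{2N}` is the coefficient of `x^{2N}` in `u`. -/
theorem gauss_lobatto_aliasing (N : ℕ) (hN : 1 ≤ N)
    (ξ ρ : ℕ → ℝ)
    (hfirst : ξ 0 = -1) (hlast : ξ N = 1)
    (hmono : ∀ i < N, ξ i < ξ (i + 1))
    (hexact : ∀ u : Polynomial ℝ, u.natDegree ≤ 2 * N - 1 →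
      (∫ x in (-1:ℝ)..1, u.eval x)
        = ∑ i ∈ Finset.range (N + 1), u.eval (ξ i) * ρ i)
    (u : Polynomial ℝ) (hu : u.natDegree ≤ 2 * N + 1) :
    ∑ i ∈ Finset.range (N + 1), u.eval (ξ i) * ρ i
      = (∫ x in (-1:ℝ)..1, u.eval x)
        + u.coeff (2 * N) *
          (2 ^ (2 * N + 1) * N * ((N - 1).factorial : ℝ) ^ 2
              * ((N + 1).factorial : ℝ) ^ 2)
          / ((N + 1) * (2 * N + 1) * ((2 * N).factorial : ℝ) ^ 2) := by
  classical
  have hpintu : (∫ x in (-1:ℝ)..1, u.eval x) = pint u := rfl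
  rw [hpintu]
  set S : Polynomial ℝ → ℝ := fun p => ∑ i ∈ Finset.range (N + 1), p.eval (ξ i) * ρ i
    with hS
  have hSgoal : (∑ i ∈ Finset.range (N + 1), u.eval (ξ i) * ρ i) = S u := rfl
  rw [hSgoal]
  have hSadd : ∀ p q : Polynomial ℝ, S (p + q) = S p + S q := by
    intro p q
    simp only [hS, eval_add, add_mul]
    rw [Finset.sum_add_distrib]
  have hSsmul : ∀ (c : ℝ) (p : Polynomial ℝ), S (C c * p) = c * S p := by
    intro c p
    simp only [hS, eval_mul, eval_C, Finset.mul_sum]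
    congr 1; funext i; ring
  have hSsub : ∀ p q : Polynomial ℝ, S (p - q) = S p - S q := by
    intro p q
    have h := hSadd (p - q) q
    rw [sub_add_cancel] at h
    linarith
  have hex : ∀ p : Polynomial ℝ, p.natDegree ≤ 2*N - 1 → S p = pint p := by
    intro p hp
    have h := hexact p hp
    simp only [hS]
    exact h.symm
  -- node polynomial
  set P : Polynomial ℝ := ∏ i ∈ Finset.Ioo 0 N, (X - C (ξ i)) with hPdef
  have hPm : P.Monic := monic_prod_of_monic _ _ (fun i _ => monic_X_sub_C (ξ i))
  have hPd : P.natDegree = N - 1 := by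
    rw [hPdef, natDegree_prod_of_monic _ _ (fun i _ => monic_X_sub_C (ξ i))]
    simp [natDegree_X_sub_C, Nat.card_Ioo]
  have hPeval : ∀ i, 0 < i → i < N → P.eval (ξ i) = 0 := by
    intro i h1 h2
    rw [hPdef, eval_prod]
    apply Finset.prod_eq_zero (Finset.mem_Ioo.mpr ⟨h1, h2⟩)
    simp
  have hkill : ∀ (g : Polynomial ℝ) (i : ℕ), i ∈ Finset.range (N+1) →
      ((1 - X^2) * (P * g)).eval (ξ i) = 0 := by
    intro g i hi
    rw [Finset.mem_range] at hi
    rcases eq_or_ne i 0 with rfl | h0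
    · simp [hfirst]
    rcases eq_or_ne i N with rfl | hn
    · simp [hlast]
    · have h := hPeval i (Nat.pos_of_ne_zero h0) (by omega)
      simp [h]
  have hSkill : ∀ g : Polynomial ℝ, S ((1 - X^2) * (P * g)) = 0 := by
    intro g
    simp only [hS]
    apply Finset.sum_eq_zero
    intro i hi
    rw [hkill g i hi, zero_mul]
  have horthP : ∀ p : Polynomial ℝ, (p = 0 ∨ p.natDegree + 2 ≤ N) →
      pint ((1 - X^2) * P * p) = 0 := by
    intro p hp
    rcases hp with rfl | hp
    · rw [mul_zero]
      simp [pint]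
    · have hdeg : ((1 - X^2) * (P * p)).natDegree ≤ 2*N - 1 := by
        have h1 : (P * p).natDegree ≤ (N-1) + p.natDegree :=
          natDegree_mul_le_of_le hPd.le le_rfl
        have h2 : ((1 - X^2) * (P * p)).natDegree ≤ 2 + ((N-1) + p.natDegree) :=
          natDegree_mul_le_of_le natDeg_w h1
        omega
      rw [show (1 - X^2) * P * p = (1 - X^2) * (P * p) by ring]
      rw [← hex _ hdeg]
      exact hSkill p
  -- uniqueness : P = Jn N
  have hPJ : P = Jn N := by
    have hd0 : P - Jn N = 0 := by
      set d : Polynomial ℝ := P - Jn N with hdd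
      have hPtop : P.coeff (N-1) = 1 := by
        have h := hPm.coeff_natDegree
        rwa [hPd] at h
      have hdtop : d.coeff (N-1) = 0 := by
        rw [hdd, coeff_sub, Jn_coeff_top N hN, hPtop, sub_self]
      have hddeg : d.natDegree ≤ N - 1 := by
        refine le_trans (natDegree_sub_le _ _) ?_
        simp [hPd.le, Jn_deg N]
      rcases eq_or_ne N 1 with rfl | hN1
      · have hC := Polynomial.eq_C_of_natDegree_le_zero
          (le_trans hddeg (by norm_num))
        rw [hC]
        have : d.coeff 0 = 0 := hdtop
        rw [this, C_0]
      · have hN2 : 2 ≤ N := by omega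
        have hdeg2 : d = 0 ∨ d.natDegree + 2 ≤ N := by
          rcases eq_or_ne d 0 with hd0' | hdne
          · exact Or.inl hd0'
          · right
            have h : d.natDegree ≤ N - 2 := by
              apply natDegree_le_iff_coeff_eq_zero.mpr
              intro m hm
              rcases eq_or_ne m (N-1) with rfl | hm2
              · exact hdtop
              · exact coeff_eq_zero_of_natDegree_lt (by omega)
            omega
        have hz1 := horthP d hdeg2
        have hz2 := Jn_orth N hN d hdeg2
        have hz : pint ((1 - X^2) * (d * d)) = 0 := by
          have hmm : (1 - X^2) * (d * d)
              = ((1 - X^2) * P * d) - ((1 - X^2) * Jn N * d) := by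
            rw [hdd]; ring
          rw [hmm, pint_sub, hz1, hz2, sub_zero]
        exact pint_sq_zero d hz
    have := sub_eq_zero.mp hd0
    exact this
  have hPc : P.comp (-X) = C ((-1:ℝ)^(N+1)) * P := by
    rw [hPJ, Jn_comp_neg]
  -- w1
  set w1 : Polynomial ℝ := (X^2 - 1) * (P * P) with hw1
  have hw1S : S w1 = 0 := by
    have h : w1 = (1 - X^2) * (P * (-P)) := by rw [hw1]; ring
    rw [h]
    exact hSkill (-P)
  have hw1pint : pint w1 = -pint ((1 - X^2) * (Jn N * Jn N)) := by
    rw [show w1 = -((1 - X^2) * (Jn N * Jn N)) by rw [hw1, hPJ]; ring, pint_neg]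
  have hm2 : (X^2 - 1 : Polynomial ℝ).Monic := by
    have h := monic_X_pow_sub_C (1:ℝ) (n := 2) (by norm_num)
    simpa using h
  have hw1m : w1.Monic := hm2.mul (hPm.mul hPm)
  have hdX2 : (X^2 - 1 : Polynomial ℝ).natDegree = 2 := by
    have h2 : (X^2 - 1 : Polynomial ℝ) = X^2 - C 1 := by simp
    rw [h2, natDegree_X_pow_sub_C]
  have hw1deg : w1.natDegree = 2*N := by
    rw [hw1, hm2.natDegree_mul (hPm.mul hPm), hdX2, hPm.natDegree_mul hPm, hPd]
    omega
  -- w2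
  set w2 : Polynomial ℝ := X * w1 with hw2
  have hw2S : S w2 = 0 := by
    have h : w2 = (1 - X^2) * (P * (-(X * P))) := by rw [hw2, hw1]; ring
    rw [h]
    exact hSkill _
  have hw2m : w2.Monic := monic_X.mul hw1m
  have hw2deg : w2.natDegree = 2*N+1 := by
    rw [hw2, monic_X.natDegree_mul hw1m, natDegree_X, hw1deg]
    omega
  have he : ((-1:ℝ)^(N+1)) * ((-1:ℝ)^(N+1)) = 1 := by
    rw [← pow_add, show (N+1)+(N+1) = 2*(N+1) by ring, pow_mul]
    norm_num
  have hw2par : w2.comp (-X) = -w2 := by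
    rw [hw2, hw1, mul_comp, mul_comp, mul_comp, X_comp, sub_comp, pow_comp, X_comp,
      one_comp, hPc]
    have hCe : (C ((-1:ℝ)^(N+1)) * P) * (C ((-1:ℝ)^(N+1)) * P) = P * P := by
      have h1 : C ((-1:ℝ)^(N+1)) * C ((-1:ℝ)^(N+1)) = 1 := by
        rw [← C_mul, he, C_1]
      calc (C ((-1:ℝ)^(N+1)) * P) * (C ((-1:ℝ)^(N+1)) * P)
          = (C ((-1:ℝ)^(N+1)) * C ((-1:ℝ)^(N+1))) * (P * P) := by ring
        _ = P * P := by rw [h1, one_mul]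
    rw [hCe]
    ring
  have hw2pint : pint w2 = 0 := pint_odd w2 hw2par
  have hw2c : w2.coeff (2*N) = 0 := by
    have h1 := coeff_comp_neg w2 (2*N)
    rw [hw2par, coeff_neg] at h1
    have h2 : ((-1:ℝ))^(2*N) = 1 := by
      rw [pow_mul]; norm_num
    rw [h2, one_mul] at h1
    linarith
  -- remainders have low degree
  have hr1deg : (w1 - X^(2*N)).natDegree ≤ 2*N - 1 := by
    apply natDegree_le_iff_coeff_eq_zero.mpr
    intro m hm
    rw [coeff_sub, coeff_X_pow]
    rcases eq_or_ne m (2*N) with rfl | hne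
    · have h : w1.coeff (2*N) = 1 := by
        have h := hw1m.coeff_natDegree
        rwa [hw1deg] at h
      simp [h]
    · rw [coeff_eq_zero_of_natDegree_lt (by rw [hw1deg]; omega)]
      simp [hne]
  have hr2deg : (w2 - X^(2*N+1)).natDegree ≤ 2*N - 1 := by
    apply natDegree_le_iff_coeff_eq_zero.mpr
    intro m hm
    rw [coeff_sub, coeff_X_pow]
    rcases eq_or_ne m (2*N+1) with rfl | hne
    · have h : w2.coeff (2*N+1) = 1 := by
        have h := hw2m.coeff_natDegree
        rwa [hw2deg] at h
      simp [h]
    rcases eq_or_ne m (2*N) with rfl | hne2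
    · rw [hw2c]
      simp [hne]
    · rw [coeff_eq_zero_of_natDegree_lt (by rw [hw2deg]; omega)]
      simp [hne]
  -- decompose u
  set a : ℝ := u.coeff (2*N+1) with ha
  set b : ℝ := u.coeff (2*N) with hb
  set ru : Polynomial ℝ := u - C a * X^(2*N+1) - C b * X^(2*N) with hru
  have hrudeg : ru.natDegree ≤ 2*N - 1 := by
    apply natDegree_le_iff_coeff_eq_zero.mpr
    intro m hm
    rw [hru, coeff_sub, coeff_sub, coeff_C_mul, coeff_C_mul, coeff_X_pow, coeff_X_pow]
    rcases eq_or_ne m (2*N+1) with rfl | hne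
    · simp [ha, show (2*N+1 : ℕ) ≠ 2*N by omega]
    rcases eq_or_ne m (2*N) with rfl | hne2
    · simp [hb, hne]
    · rw [coeff_eq_zero_of_natDegree_lt (by omega : u.natDegree < m)]
      simp [hne, hne2]
  have hudecomp : u = C a * X^(2*N+1) + C b * X^(2*N) + ru := by
    rw [hru]; ring
  -- quadrature identities
  set KJ : ℝ := pint ((1 - X^2) * (Jn N * Jn N)) with hKJ
  have hX1 : S (X^(2*N)) = pint (X^(2*N)) + KJ := by
    have h1 : S (w1 - X^(2*N)) = pint (w1 - X^(2*N)) := hex _ hr1deg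
    rw [hSsub, hw1S, pint_sub, hw1pint] at h1
    rw [hKJ]
    linarith
  have hX2 : S (X^(2*N+1)) = pint (X^(2*N+1)) := by
    have h1 : S (w2 - X^(2*N+1)) = pint (w2 - X^(2*N+1)) := hex _ hr2deg
    rw [hSsub, hw2S, pint_sub, hw2pint] at h1
    linarith
  have hruint : S ru = pint ru := hex _ hrudeg
  have hSu : S u = a * pint (X^(2*N+1)) + b * (pint (X^(2*N)) + KJ) + pint ru := by
    conv_lhs => rw [hudecomp]
    rw [hSadd, hSadd, hSsmul, hSsmul, hX1, hX2, hruint]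
  have hpu : pint u = a * pint (X^(2*N+1)) + b * pint (X^(2*N)) + pint ru := by
    conv_lhs => rw [hudecomp]
    rw [pint_add, pint_add, pint_smul, pint_smul]
  rw [hSu, hpu, hKJ, Jn_norm N hN]
  push_cast
  ring
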